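/- Let (M^n, g) be a smooth Lorentzian manifold of signature (+,-,...,-) with a continuously differentiable symmetric (0,2)-tensor field F. Then F(p,p) ≥ 0 for all null vectors p ∈ TM if and only if for every compact Z ⊂ M, C_Z^T := inf over z ∈ Z and timelike p ∈ T_z M (g_z(p,p) > 0) of F(p,p)/g(p,p) is finite (> -∞). -/

import Mathlib

open scoped Manifold

/-- Representation of a bilinear form in a Lorentz-orthonormal basis. -/
lemma lorentz_rep {n : ℕ} {V : Type*} [AddCommGroup V] [Module ℝ V]
    (G : V →ₗ[ℝ] V →ₗ[ℝ] ℝ) (e : Module.Basis (Fin n) ℝ V)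
    (hG : ∀ i j, G (e i) (e j) = if i = j then (if (i : ℕ) = 0 then 1 else -1) else 0)
    (x y : V) :
    G x y = ∑ i : Fin n, (if (i : ℕ) = 0 then (1:ℝ) else -1) * (e.repr x i * e.repr y i) := by
  conv_lhs => rw [← e.sum_repr x, ← e.sum_repr y]
  simp only [map_sum, map_smul, LinearMap.sum_apply, LinearMap.smul_apply, smul_eq_mul, hG,
    mul_ite, mul_neg, mul_one, mul_zero, Finset.sum_ite_eq, Finset.sum_ite_eq', Finset.mem_univ, if_true]
  exact Finset.sum_congr rfl fun i _ => by split <;> simp <;> ring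

/-- In a Lorentzian space, a nonzero vector orthogonal to a timelike vector is spacelike. -/
lemma lorentz_perp_neg {n : ℕ} (hn : 0 < n) {V : Type*} [AddCommGroup V] [Module ℝ V]
    (G : V →ₗ[ℝ] V →ₗ[ℝ] ℝ) (e : Module.Basis (Fin n) ℝ V)
    (hG : ∀ i j, G (e i) (e j) = if i = j then (if (i : ℕ) = 0 then 1 else -1) else 0)
    (x y : V) (hx : 0 < G x x) (hxy : G x y = 0) (hy : y ≠ 0) : G y y < 0 := by
  classical
  set i₀ : Fin n := ⟨0, hn⟩ with hi₀
  have hmem : i₀ ∈ Finset.univ := Finset.mem_univ _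
  set S : Finset (Fin n) := Finset.univ.erase i₀ with hS
  have key : ∀ v w : V, G v w = e.repr v i₀ * e.repr w i₀ -
      ∑ i ∈ S, e.repr v i * e.repr w i := by
    intro v w
    rw [lorentz_rep G e hG v w, ← Finset.add_sum_erase _ _ hmem]
    simp only [hi₀, if_pos rfl, one_mul, ← hS]
    congr 1
    · norm_num
    rw [← Finset.sum_neg_distrib]
    refine Finset.sum_congr rfl fun i hi => ?_
    have : ¬ ((i : ℕ) = 0) := fun h => (Finset.mem_erase.mp hi).1 (Fin.ext h)
    rw [if_neg this]; ring
  have hxx := key x x; have hxy' := key x y; have hyy := key y y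
  rw [hxy] at hxy'
  have CS : (∑ i ∈ S, e.repr x i * e.repr y i) ^ 2 ≤
      (∑ i ∈ S, (e.repr x i) ^ 2) * (∑ i ∈ S, (e.repr y i) ^ 2) := by
    have := Finset.sum_mul_sq_le_sq_mul_sq S (fun i => e.repr x i) (fun i => e.repr y i)
    simpa using this
  have hsum_aa : ∑ i ∈ S, e.repr x i * e.repr x i = ∑ i ∈ S, (e.repr x i)^2 :=
    Finset.sum_congr rfl fun i _ => by ring
  have hsum_bb : ∑ i ∈ S, e.repr y i * e.repr y i = ∑ i ∈ S, (e.repr y i)^2 :=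
    Finset.sum_congr rfl fun i _ => by ring
  have hA2 : ∑ i ∈ S, (e.repr x i) ^ 2 < (e.repr x i₀) ^ 2 := by nlinarith [hxx, hx]
  have hB2nn : 0 ≤ ∑ i ∈ S, (e.repr y i) ^ 2 := Finset.sum_nonneg fun i _ => sq_nonneg _
  rcases eq_or_lt_of_le hB2nn with hB0 | hBpos
  · exfalso
    have hbz : ∀ i ∈ S, e.repr y i = 0 := by
      intro i hi
      have h1 : ∀ j ∈ S, 0 ≤ (e.repr y j)^2 := fun j _ => sq_nonneg _
      have h2 := (Finset.sum_eq_zero_iff_of_nonneg h1).mp hB0.symm i hi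
      exact (pow_eq_zero_iff two_ne_zero).mp h2
    have ha0 : e.repr x i₀ ≠ 0 := by
      intro h
      rw [h] at hA2
      have : (0:ℝ) ≤ ∑ i ∈ S, (e.repr x i)^2 := Finset.sum_nonneg fun i _ => sq_nonneg _
      nlinarith
    have hS0 : ∑ i ∈ S, e.repr x i * e.repr y i = 0 :=
      Finset.sum_eq_zero fun i hi => by rw [hbz i hi, mul_zero]
    rw [hS0, sub_zero] at hxy'
    have hb0 : e.repr y i₀ = 0 := by
      rcases mul_eq_zero.mp hxy'.symm with h | h
      · exact absurd h ha0
      · exact h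
    apply hy
    have hall : ∀ i : Fin n, e.repr y i = 0 := by
      intro i
      by_cases h : i = i₀
      · rw [h]; exact hb0
      · exact hbz i (Finset.mem_erase.mpr ⟨h, Finset.mem_univ _⟩)
    have hz : e.repr y = 0 := by ext i; simp [hall i]
    have := congrArg (e.repr.symm) hz
    simpa using this
  · rw [hyy, hsum_bb]
    have ha2pos : 0 < (e.repr x i₀)^2 :=
      lt_of_le_of_lt (Finset.sum_nonneg fun i _ => sq_nonneg _) hA2
    have e1 : e.repr x i₀ * e.repr y i₀ = ∑ i ∈ S, e.repr x i * e.repr y i := by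
      linarith [hxy']
    have e2 : (e.repr x i₀)^2 * (e.repr y i₀)^2 =
        (∑ i ∈ S, e.repr x i * e.repr y i) ^ 2 := by rw [← e1]; ring
    have h1 : (e.repr x i₀)^2 * (e.repr y i₀)^2 ≤
        (∑ i ∈ S, (e.repr x i)^2) * (∑ i ∈ S, (e.repr y i)^2) := by
      rw [e2]; exact CS
    have h2 : (∑ i ∈ S, (e.repr x i)^2) * (∑ i ∈ S, (e.repr y i)^2) <
        (e.repr x i₀)^2 * (∑ i ∈ S, (e.repr y i)^2) :=
      mul_lt_mul_of_pos_right hA2 hBpos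
    nlinarith [h1, h2, ha2pos]

set_option maxHeartbeats 2000000 in
/-- Pointwise quantitative bound: if F is nonnegative on null vectors of G, with bounds
on F at a unit timelike vector and on unit spacelike vectors orthogonal to it, then F
is bounded below against G on the timelike cone. -/
lemma pointwise_bound {V : Type*} [AddCommGroup V] [Module ℝ V]
    (G F : V →ₗ[ℝ] V →ₗ[ℝ] ℝ)
    (hGs : ∀ v w, G v w = G w v) (hFs : ∀ v w, F v w = F w v)
    (e₀ : V) (he₀ : G e₀ e₀ = 1)
    (hnull : ∀ v, G v v = 0 → 0 ≤ F v v)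
    (hperp : ∀ w, G e₀ w = 0 → w ≠ 0 → G w w < 0)
    (α κ : ℝ) (hα0 : 0 ≤ α) (hκ0 : 0 ≤ κ) (hα : -α ≤ F e₀ e₀)
    (hκ : ∀ u, G e₀ u = 0 → G u u = -1 → F u u ≤ κ)
    (p : V) (hp : 0 < G p p) : -(2*α + κ) * G p p ≤ F p p := by
  set a : ℝ := G e₀ p with ha
  set w : V := p - a • e₀ with hw
  have hGe₀w : G e₀ w = 0 := by
    simp only [hw, map_sub, map_smul, smul_eq_mul, he₀]
    simp [ha]
  by_cases hw0 : w = 0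
  · -- p = a • e₀
    have hpa : p = a • e₀ := sub_eq_zero.mp hw0
    have hGpp : G p p = a^2 := by
      rw [hpa]; simp [map_smul, he₀]; ring
    have hFpp : F p p = a^2 * F e₀ e₀ := by
      rw [hpa]; simp [map_smul]; ring
    rw [hFpp]
    have h1 : a^2 * F e₀ e₀ ≥ a^2 * (-α) := by
      apply mul_le_mul_of_nonneg_left hα (sq_nonneg a)
    have h2 : (0:ℝ) < a^2 := by rw [← hGpp]; exact hp
    nlinarith [hGpp]
  · have hww : G w w < 0 := hperp w hGe₀w hw0
    set r : ℝ := Real.sqrt (-(G w w)) with hr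
    have hrpos : 0 < r := Real.sqrt_pos.mpr (by linarith)
    have hr2 : r^2 = -(G w w) := Real.sq_sqrt (by linarith)
    set u : V := r⁻¹ • w with hu
    have hGe₀u : G e₀ u = 0 := by
      simp only [hu, map_smul, smul_eq_mul, hGe₀w, mul_zero]
    have hGuu : G u u = -1 := by
      simp only [hu, map_smul, LinearMap.smul_apply, smul_eq_mul]
      field_simp
      nlinarith [hr2]
    have hpdec : p = a • e₀ + r • u := by
      rw [hu, smul_smul, mul_inv_cancel₀ (ne_of_gt hrpos), one_smul, hw]; abel
    -- abbreviations
    set A : ℝ := F e₀ e₀ with hA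
    set B : ℝ := F e₀ u with hB
    set Cu : ℝ := F u u with hCu
    have hGword : G u e₀ = 0 := by rw [← hGs]; exact hGe₀u
    have hGpp : G p p = a^2 - r^2 := by
      rw [hpdec]
      simp only [map_add, map_smul, LinearMap.add_apply, LinearMap.smul_apply, smul_eq_mul,
        he₀, hGe₀u, hGword, hGuu]
      ring
    have hFpp : F p p = a^2*A + 2*a*r*B + r^2*Cu := by
      rw [hpdec]
      simp only [map_add, map_smul, LinearMap.add_apply, LinearMap.smul_apply, smul_eq_mul]
      rw [hFs u e₀]
      simp only [← hA, ← hB, ← hCu]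
      ring
    -- null conditions
    have hn1 : 0 ≤ A + 2*B + Cu := by
      have hnv : G (e₀ + u) (e₀ + u) = 0 := by
        simp only [map_add, LinearMap.add_apply, he₀, hGe₀u, hGword, hGuu]; ring
      have := hnull _ hnv
      simp only [map_add, LinearMap.add_apply] at this
      rw [hFs u e₀] at this
      simp only [← hA, ← hB, ← hCu] at this
      linarith
    have hn2 : 0 ≤ A - 2*B + Cu := by
      have hnv : G (e₀ - u) (e₀ - u) = 0 := by
        simp only [map_sub, LinearMap.sub_apply, he₀, hGe₀u, hGword, hGuu]; ring
      have := hnull _ hnv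
      simp only [map_sub, LinearMap.sub_apply] at this
      rw [hFs u e₀] at this
      simp only [← hA, ← hB, ← hCu] at this
      linarith
    have hκCu : Cu ≤ κ := hκ u hGe₀u hGuu
    -- |a| > r
    have hm : r < |a| := by
      have h1 : r^2 < a^2 := by rw [hGpp] at hp; nlinarith
      have := abs_nonneg a
      nlinarith [sq_abs a]
    have habs2B : |2*B| ≤ A + Cu := abs_le.mpr ⟨by linarith, by linarith⟩
    have h2B : |2*B| = 2*|B| := by rw [abs_mul, abs_two]
    have hcross : -( |a| * r * (A + Cu)) ≤ 2*a*r*B := by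
      have h1 : |2*a*r*B| ≤ |a| * r * (A + Cu) := by
        have he : |2*a*r*B| = (|a| * r) * (2*|B|) := by
          rw [abs_mul, abs_mul, abs_mul, abs_two, abs_of_nonneg (le_of_lt hrpos)]
          ring
        rw [he, ← h2B]
        exact mul_le_mul_of_nonneg_left habs2B (mul_nonneg (abs_nonneg a) (le_of_lt hrpos))
      linarith [neg_abs_le (2*a*r*B)]
    have hACu : -(α + κ) ≤ A - Cu := by linarith
    clear_value a w r u A B Cu
    set m : ℝ := |a| with hmdef
    clear_value m
    have hm0 : 0 < m := lt_of_le_of_lt hrpos.le hm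
    have hs : 0 < m - r := by linarith
    have ht : 0 < m^2 - r^2 := by nlinarith
    have hsq : m^2 = a^2 := by rw [hmdef]; exact sq_abs a
    have hid : a^2*A + r^2*Cu - m*r*(A+Cu) = (m-r)*(m-r)*A + ((m-r)*r)*(A-Cu) := by
      rw [← hsq]; ring
    have k1 : (m-r)*(m-r) ≤ m^2-r^2 := by nlinarith
    have k2 : (m-r)*r ≤ m^2-r^2 := by nlinarith
    have ineq1 : -((m^2 - r^2)*α) ≤ (m-r)*(m-r)*A := by
      rcases le_or_gt 0 A with h | h
      · nlinarith [mul_nonneg (mul_nonneg hs.le hs.le) h, mul_nonneg ht.le hα0]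
      · nlinarith [mul_le_mul_of_nonpos_right k1 h.le, mul_le_mul_of_nonneg_left hα ht.le]
    have ineq2 : -((m^2 - r^2)*(α+κ)) ≤ ((m-r)*r)*(A-Cu) := by
      rcases le_or_gt 0 (A - Cu) with h | h
      · nlinarith [mul_nonneg (mul_nonneg hs.le hrpos.le) h,
          mul_nonneg ht.le (by linarith : (0:ℝ) ≤ α+κ)]
      · nlinarith [mul_le_mul_of_nonpos_right k2 h.le, mul_le_mul_of_nonneg_left hACu ht.le]
    have hfin : -((m^2-r^2)*α) + -((m^2-r^2)*(α+κ)) = -(2*α+κ)*(a^2-r^2) := by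
      rw [hsq]; ring
    rw [hFpp, hGpp]
    linarith [hcross, ineq1, ineq2, hid, hfin]

set_option maxHeartbeats 1000000 in
/-- Backward direction, pointwise: a lower bound on timelike vectors forces
nonnegativity on null vectors. -/
lemma null_nonneg_of_timelike_bound {n : ℕ} (hn : 0 < n) {V : Type*} [AddCommGroup V]
    [Module ℝ V]
    (G F : V →ₗ[ℝ] V →ₗ[ℝ] ℝ) (hGs : ∀ v w, G v w = G w v) (hFs : ∀ v w, F v w = F w v)
    (e : Module.Basis (Fin n) ℝ V)
    (hG : ∀ i j, G (e i) (e j) = if i = j then (if (i : ℕ) = 0 then 1 else -1) else 0)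
    (C : ℝ) (hC : ∀ p : V, 0 < G p p → C * G p p ≤ F p p)
    (p : V) (hp : G p p = 0) : 0 ≤ F p p := by
  set i₀ : Fin n := ⟨0, hn⟩ with hi₀
  set e₀ : V := e i₀ with he₀def
  have he₀ : G e₀ e₀ = 1 := by
    have := hG i₀ i₀; simpa [hi₀] using this
  set b : ℝ := G e₀ p with hb
  by_cases hb0 : b = 0
  · by_cases hp0 : p = 0
    · rw [hp0]; simp
    · exfalso
      have := lorentz_perp_neg hn G e hG e₀ p (by rw [he₀]; norm_num) hb0 hp0
      linarith [hp, this]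
  · suffices h : ∀ ε : ℝ, 0 < ε → -ε ≤ F p p by
      by_contra hneg
      push_neg at hneg
      have := h (-(F p p)/2) (by linarith)
      linarith
    intro ε hε
    set X : ℝ := F e₀ p with hX
    set Y : ℝ := F e₀ e₀ with hY
    clear_value b X Y e₀
    set K : ℝ := 2* |C| * |b| + |C| + 2* |X| + |Y| + 1 with hK
    have hKpos : 0 < K := by positivity
    set τ : ℝ := min 1 (ε/K) with hτ
    have hτpos : 0 < τ := lt_min one_pos (div_pos hε hKpos)
    have hτ1 : τ ≤ 1 := min_le_left _ _
    have hτε : τ * K ≤ ε := (le_div_iff₀ hKpos).mp (min_le_right _ _)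
    clear_value τ
    set t : ℝ := if 0 < b then τ else -τ with ht
    have habs_b : 0 < |b| := abs_pos.mpr hb0
    have htb : t * b = τ * |b| := by
      rw [ht]; split
      · rw [abs_of_pos ‹0 < b›]
      · have hbneg : b < 0 := lt_of_le_of_ne (not_lt.mp ‹¬ 0 < b›) hb0
        rw [abs_of_neg hbneg]; ring
    have ht2 : t^2 = τ^2 := by rw [ht]; split <;> ring
    have habs_t : |t| = τ := by
      rw [ht]; split
      · exact abs_of_pos hτpos
      · rw [abs_neg]; exact abs_of_pos hτpos
    have hq : G (p + t • e₀) (p + t • e₀) = 2*(t*b) + t^2 := by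
      simp only [map_add, map_smul, LinearMap.add_apply, LinearMap.smul_apply, smul_eq_mul,
        he₀, hp]
      rw [hGs p e₀, ← hb]
      ring
    have hqpos : 0 < G (p + t • e₀) (p + t • e₀) := by
      rw [hq, htb, ht2]; positivity
    have hFq : F (p + t • e₀) (p + t • e₀) = F p p + 2*t*X + t^2*Y := by
      simp only [map_add, map_smul, LinearMap.add_apply, LinearMap.smul_apply, smul_eq_mul]
      rw [hFs p e₀, ← hX, ← hY]
      ring
    have hmain := hC _ hqpos
    rw [hq, hFq] at hmain
    have h1 : -(τ*(2* |C| * |b| + |C|)) ≤ C * (2*(t*b)+t^2) := by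
      have e1 : C * (2*(t*b)+t^2) = C * (2*(τ* |b|)+τ^2) := by rw [htb, ht2]
      rw [e1]
      have h2 : 0 < 2*(τ* |b|)+τ^2 := by positivity
      have h3 : -|C| ≤ C := neg_abs_le C
      have h4 : τ^2 ≤ τ := by nlinarith
      nlinarith [mul_le_mul_of_nonneg_right h3 h2.le, abs_nonneg C, mul_nonneg (abs_nonneg C) (mul_nonneg hτpos.le habs_b.le)]
    have h2 : 2*t*X ≤ τ*(2* |X|) := by
      have : 2*t*X ≤ |2*t*X| := le_abs_self _
      rw [abs_mul, abs_mul, abs_two, habs_t] at this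
      linarith
    have h3 : t^2*Y ≤ τ* |Y| := by
      have e1 : t^2*Y ≤ |t^2*Y| := le_abs_self _
      rw [abs_mul, abs_pow, habs_t] at e1
      have e2 : τ^2* |Y| ≤ τ* |Y| := by nlinarith [mul_nonneg (mul_nonneg hτpos.le (abs_nonneg Y)) (sub_nonneg.mpr hτ1)]
      calc t^2*Y ≤ τ^2* |Y| := e1
        _ ≤ τ* |Y| := e2
    have final : -(τ*K) ≤ F p p := by
      rw [hK]
      nlinarith [hmain, h1, h2, h3, hτpos]
    linarith [final, hτε]

lemma isCompact_inter_preimage {X Y : Type*} [TopologicalSpace X] [TopologicalSpace Y]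
    {K : Set X} {f : X → Y} {s : Set Y} (hK : IsCompact K) (hf : ContinuousOn f K)
    (hs : IsClosed s) : IsCompact (K ∩ f ⁻¹' s) := by
  have hc : CompactSpace K := isCompact_iff_compactSpace.mp hK
  have hg : Continuous (K.restrict f) := continuousOn_iff_continuous_restrict.mp hf
  have h1 : IsCompact ((K.restrict f) ⁻¹' s) := (hs.preimage hg).isCompact
  have h2 : Subtype.val '' ((K.restrict f) ⁻¹' s) = K ∩ f ⁻¹' s := by
    ext x; constructor
    · rintro ⟨⟨x', hx'⟩, hmem, rfl⟩; exact ⟨hx', hmem⟩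
    · rintro ⟨hx, hmem⟩; exact ⟨⟨x, hx⟩, hmem, rfl⟩
  rw [← h2]
  exact h1.image continuous_subtype_val

set_option maxHeartbeats 2000000 in
/-- The core uniform bound over a compact set, for continuous families of
bilinear forms on Euclidean space. -/
lemma core_bound {n : ℕ} (hn : 0 < n) {X : Type*} [TopologicalSpace X]
    (A O : Set X) (hA : IsCompact A) (hO : IsOpen O) (hAO : A ⊆ O)
    (G F : X → (EuclideanSpace ℝ (Fin n) →ₗ[ℝ] EuclideanSpace ℝ (Fin n) →ₗ[ℝ] ℝ))
    (hQG : ContinuousOn (fun q : X × EuclideanSpace ℝ (Fin n) => G q.1 q.2 q.2) (O ×ˢ Set.univ))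
    (hQF : ContinuousOn (fun q : X × EuclideanSpace ℝ (Fin n) => F q.1 q.2 q.2) (O ×ˢ Set.univ))
    (hGsymm : ∀ z ∈ A, ∀ v w, G z v w = G z w v)
    (hFsymm : ∀ z ∈ A, ∀ v w, F z v w = F z w v)
    (hbasis : ∀ z ∈ A, ∃ b : Module.Basis (Fin n) ℝ (EuclideanSpace ℝ (Fin n)),
      ∀ i j, G z (b i) (b j) = if i = j then (if (i : ℕ) = 0 then 1 else -1) else 0)
    (hnull : ∀ z ∈ A, ∀ w, G z w w = 0 → 0 ≤ F z w w) :
    ∃ C : ℝ, ∀ z ∈ A, ∀ w, 0 < G z w w → C * G z w w ≤ F z w w := by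
  classical
  rcases Set.eq_empty_or_nonempty A with rfl | hAne
  · exact ⟨0, by simp⟩
  have hsphA : IsCompact (A ×ˢ Metric.sphere (0 : EuclideanSpace ℝ (Fin n)) 1) :=
    hA.prod (isCompact_sphere 0 1)
  have hsub : A ×ˢ Metric.sphere (0 : EuclideanSpace ℝ (Fin n)) 1 ⊆ O ×ˢ Set.univ :=
    Set.prod_mono hAO (Set.subset_univ _)
  obtain ⟨M₀, hM₀⟩ := hsphA.exists_bound_of_continuousOn (hQF.mono hsub)
  set Mb : ℝ := max M₀ 0 with hMbdef
  have hMb0 : 0 ≤ Mb := le_max_right _ _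
  have hFbound : ∀ z ∈ A, ∀ w : EuclideanSpace ℝ (Fin n), |F z w w| ≤ Mb * ‖w‖^2 := by
    intro z hz w
    by_cases hw : w = 0
    · rw [hw]
      simp
    · have hwn : ‖w‖ ≠ 0 := norm_ne_zero_iff.mpr hw
      have hwpos : 0 < ‖w‖ := norm_pos_iff.mpr hw
      set u : EuclideanSpace ℝ (Fin n) := ‖w‖⁻¹ • w with hu
      have husphere : u ∈ Metric.sphere (0 : EuclideanSpace ℝ (Fin n)) 1 := by
        simp only [mem_sphere_iff_norm, sub_zero, hu, norm_smul, norm_inv, norm_norm]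
        field_simp
      have h1 : |F z u u| ≤ M₀ := by
        have := hM₀ (z, u) (Set.mk_mem_prod hz husphere)
        simpa [Real.norm_eq_abs] using this
      have hdecomp : w = ‖w‖ • u := by
        rw [hu, smul_smul, mul_inv_cancel₀ hwn, one_smul]
      have heq : F z w w = ‖w‖^2 * F z u u := by
        conv_lhs => rw [hdecomp]
        simp only [map_smul, LinearMap.smul_apply, smul_eq_mul]
        ring
      rw [heq, abs_mul, abs_of_nonneg (by positivity : (0:ℝ) ≤ ‖w‖^2)]
      have : |F z u u| ≤ Mb := le_trans h1 (le_max_left _ _)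
      nlinarith [sq_nonneg ‖w‖]
  have hvv : ∀ i : A, ∃ v : EuclideanSpace ℝ (Fin n), G i.1 v v = 1 := by
    intro i
    obtain ⟨b, hb⟩ := hbasis i.1 i.2
    exact ⟨b ⟨0, hn⟩, by simpa using hb ⟨0, hn⟩ ⟨0, hn⟩⟩
  choose v hv using hvv
  have hslice : ∀ v₀ : EuclideanSpace ℝ (Fin n), ContinuousOn (fun z => G z v₀ v₀) O := by
    intro v₀
    exact hQG.comp ((continuous_id.prodMk continuous_const).continuousOn)
      (fun z hz => ⟨hz, Set.mem_univ _⟩)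
  set N : A → Set X := fun i => O ∩ (fun z => G z (v i) (v i)) ⁻¹' Set.Ioi (1/2 : ℝ) with hN
  have hNopen : ∀ i, IsOpen (N i) := fun i => (hslice (v i)).isOpen_inter_preimage hO isOpen_Ioi
  have hNmem : ∀ i : A, i.1 ∈ N i := by
    intro i
    refine ⟨hAO i.2, ?_⟩
    simp only [Set.mem_preimage, Set.mem_Ioi, hv i]
    norm_num
  obtain ⟨t, ht⟩ := hA.elim_finite_subcover N hNopen
    (fun z hz => Set.mem_iUnion.mpr ⟨⟨z, hz⟩, hNmem _⟩)
  have htne : t.Nonempty := by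
    obtain ⟨z, hz⟩ := hAne
    have := ht hz
    simp only [Set.mem_iUnion] at this
    obtain ⟨i, hit, _⟩ := this
    exact ⟨i, hit⟩
  set Pol : EuclideanSpace ℝ (Fin n) → X × EuclideanSpace ℝ (Fin n) → ℝ :=
    fun v₀ q => (G q.1 (v₀ + q.2) (v₀ + q.2) - G q.1 v₀ v₀ - G q.1 q.2 q.2)/2 with hPol
  have hPolcont : ∀ v₀, ContinuousOn (Pol v₀) (O ×ˢ Set.univ) := by
    intro v₀
    apply ContinuousOn.div_const
    apply ContinuousOn.sub
    apply ContinuousOn.sub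
    · exact hQG.comp ((continuous_fst.prodMk (continuous_const.add continuous_snd)).continuousOn)
        (fun q hq => ⟨hq.1, Set.mem_univ _⟩)
    · exact hQG.comp ((continuous_fst.prodMk continuous_const).continuousOn)
        (fun q hq => ⟨hq.1, Set.mem_univ _⟩)
    · exact hQG
  have hPol_eq : ∀ (v₀ : EuclideanSpace ℝ (Fin n)), ∀ z ∈ A,
      ∀ w, Pol v₀ (z, w) = G z v₀ w := by
    intro v₀ z hz w
    simp only [hPol, map_add, LinearMap.add_apply]
    rw [hGsymm z hz w v₀]
    ring
  set T : A → Set (X × EuclideanSpace ℝ (Fin n)) := fun i =>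
    (A ×ˢ Metric.sphere (0 : EuclideanSpace ℝ (Fin n)) 1) ∩
      (fun q => (G q.1 (v i) (v i), Pol (v i) q)) ⁻¹'
        {x : ℝ × ℝ | 1/2 ≤ x.1 ∧ x.2 = 0} with hT
  have hTcomp : ∀ i, IsCompact (T i) := by
    intro i
    apply isCompact_inter_preimage hsphA
    · apply ContinuousOn.prodMk
      · exact (hslice (v i)).comp continuous_fst.continuousOn
          (fun q hq => hAO hq.1)
      · exact (hPolcont (v i)).mono hsub
    · have : {x : ℝ × ℝ | 1/2 ≤ x.1 ∧ x.2 = 0} =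
          Set.Ici (1/2 : ℝ) ×ˢ ({0} : Set ℝ) := by
        ext x
        simp only [Set.mem_setOf_eq, Set.mem_prod, Set.mem_Ici, Set.mem_singleton_iff]
      rw [this]
      exact isClosed_Ici.prod isClosed_singleton
  have hTneg : ∀ i : A, ∃ δ : ℝ, 0 < δ ∧ ∀ q ∈ T i, G q.1 q.2 q.2 ≤ -δ := by
    intro i
    rcases Set.eq_empty_or_nonempty (T i) with hT0 | hTne
    · exact ⟨1, one_pos, by rw [hT0]; simp⟩
    · obtain ⟨q₀, hq₀, hmax⟩ := (hTcomp i).exists_isMaxOn hTne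
        ((hQG.mono hsub).mono Set.inter_subset_left)
      have hneg : ∀ q ∈ T i, G q.1 q.2 q.2 < 0 := by
        intro q hq
        obtain ⟨⟨hqA, hqs⟩, hpre⟩ := hq
        obtain ⟨b, hb⟩ := hbasis q.1 hqA
        have hq2 : G q.1 (v i) q.2 = 0 := by
          rw [← hPol_eq (v i) q.1 hqA q.2]
          exact hpre.2
        apply lorentz_perp_neg hn (G q.1) b hb (v i) q.2
        · linarith [hpre.1]
        · exact hq2
        · have hnq : ‖q.2‖ = 1 := by simpa [mem_sphere_iff_norm] using hqs
          intro h0; rw [h0] at hnq; simp at hnq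
      refine ⟨-(G q₀.1 q₀.2 q₀.2), by linarith [hneg q₀ hq₀], fun q hq => ?_⟩
      have := hmax hq
      simp only [neg_neg]
      exact this
  choose δ hδpos hδ using hTneg
  set Ci : A → ℝ := fun i => -(2*(2*Mb*‖v i‖^2) + Mb/(δ i)) with hCi
  refine ⟨t.inf' htne Ci, ?_⟩
  intro z hzA w hw
  have hcov := ht hzA
  simp only [Set.mem_iUnion] at hcov
  obtain ⟨i, hit, hzN⟩ := hcov
  obtain ⟨hzO, hzs'⟩ := hzN
  have hs12 : 1/2 < G z (v i) (v i) := hzs'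
  obtain ⟨b, hb⟩ := hbasis z hzA
  set s : ℝ := G z (v i) (v i) with hsdef
  have hspos : 0 < s := by rw [hsdef]; linarith
  have hsqrtpos : 0 < Real.sqrt s := Real.sqrt_pos.mpr hspos
  have hsqrt : Real.sqrt s ^ 2 = s := Real.sq_sqrt hspos.le
  set e₀ : EuclideanSpace ℝ (Fin n) := (Real.sqrt s)⁻¹ • v i with he₀def
  have he₀ : G z e₀ e₀ = 1 := by
    simp only [he₀def, map_smul, LinearMap.smul_apply, smul_eq_mul, ← hsdef]
    rw [← hsqrt]
    field_simp
    rw [Real.sqrt_sq hsqrtpos.le]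
  have he₀norm : ‖e₀‖^2 ≤ 2*‖v i‖^2 := by
    have h1 : ‖e₀‖ = (Real.sqrt s)⁻¹ * ‖v i‖ := by
      rw [he₀def, norm_smul, norm_inv, Real.norm_eq_abs, abs_of_pos hsqrtpos]
    have h2 : ((Real.sqrt s)⁻¹)^2 = s⁻¹ := by
      rw [← hsqrt]; field_simp
      rw [Real.sqrt_sq hsqrtpos.le]
    have h3 : s⁻¹ ≤ 2 := by
      rw [← one_div]
      rw [div_le_iff₀ hspos]
      linarith
    rw [h1]
    have : ((Real.sqrt s)⁻¹ * ‖v i‖)^2 = s⁻¹ * ‖v i‖^2 := by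
      rw [mul_pow, h2]
    rw [this]
    nlinarith [sq_nonneg ‖v i‖]
  have hαb : -(2*Mb*‖v i‖^2) ≤ F z e₀ e₀ := by
    have h1 := hFbound z hzA e₀
    have h2 : Mb * ‖e₀‖^2 ≤ Mb * (2*‖v i‖^2) := mul_le_mul_of_nonneg_left he₀norm hMb0
    have := neg_abs_le (F z e₀ e₀)
    nlinarith
  have hκb : ∀ u, G z e₀ u = 0 → G z u u = -1 → F z u u ≤ Mb/(δ i) := by
    intro u hpu huu
    have hu0 : u ≠ 0 := by
      intro h; rw [h] at huu; simp at huu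
    have hun : ‖u‖ ≠ 0 := norm_ne_zero_iff.mpr hu0
    have hunpos : 0 < ‖u‖ := norm_pos_iff.mpr hu0
    have hGviu : G z (v i) u = 0 := by
      have h1 : G z e₀ u = (Real.sqrt s)⁻¹ * G z (v i) u := by
        simp only [he₀def, map_smul, LinearMap.smul_apply, smul_eq_mul]
      rw [h1] at hpu
      rcases mul_eq_zero.mp hpu with h | h
      · exact absurd h (inv_ne_zero (ne_of_gt hsqrtpos))
      · exact h
    set uu : EuclideanSpace ℝ (Fin n) := ‖u‖⁻¹ • u with huudef
    have huus : uu ∈ Metric.sphere (0 : EuclideanSpace ℝ (Fin n)) 1 := by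
      simp only [mem_sphere_iff_norm, sub_zero, huudef, norm_smul, norm_inv, norm_norm]
      field_simp
    have hmemT : (z, uu) ∈ T i := by
      refine ⟨⟨hzA, huus⟩, ?_, ?_⟩
      · exact le_of_lt hs12
      · show Pol (v i) (z, uu) = 0
        rw [hPol_eq (v i) z hzA uu]
        simp only [huudef, map_smul, smul_eq_mul, hGviu, mul_zero]
    have hδu := hδ i (z, uu) hmemT
    have hGuu : G z uu uu = -(‖u‖⁻¹^2) := by
      simp only [huudef, map_smul, LinearMap.smul_apply, smul_eq_mul, huu]
      ring
    rw [hGuu] at hδu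
    have hinv : ‖u‖⁻¹^2 * ‖u‖^2 = 1 := by field_simp
    have h1 : δ i * ‖u‖^2 ≤ 1 := by nlinarith [sq_nonneg ‖u‖, hδpos i]
    have h2 : F z u u ≤ Mb * ‖u‖^2 := le_trans (le_abs_self _) (hFbound z hzA u)
    rw [le_div_iff₀ (hδpos i)]
    nlinarith [hMb0, hδpos i]
  have hperp : ∀ w', G z e₀ w' = 0 → w' ≠ 0 → G z w' w' < 0 := by
    intro w' h1 h2
    exact lorentz_perp_neg hn (G z) b hb e₀ w' (by rw [he₀]; norm_num) h1 h2
  have hmain := pointwise_bound (G z) (F z) (hGsymm z hzA) (hFsymm z hzA) e₀ he₀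
    (hnull z hzA) hperp (2*Mb*‖v i‖^2) (Mb/(δ i)) (by positivity)
    (div_nonneg hMb0 (hδpos i).le) hαb hκb w hw
  have hCle : t.inf' htne Ci ≤ Ci i := Finset.inf'_le _ hit
  calc t.inf' htne Ci * G z w w ≤ Ci i * G z w w :=
        mul_le_mul_of_nonneg_right hCle hw.le
    _ ≤ F z w w := by rw [hCi]; exact hmain

set_option maxHeartbeats 2000000 in
/-- on a smooth Lorentzian manifold of signature (+,-,…,-), a C¹
symmetric (0,2)-tensor field F is nonnegative on all null vectors iff for every
compact Z the infimum of F(p,p)/g(p,p) over timelike p based in Z is finite. -/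
theorem stmt18 {n : ℕ} (hn : 1 ≤ n)
    {M : Type*} [TopologicalSpace M] [ChartedSpace (EuclideanSpace ℝ (Fin n)) M]
    [IsManifold (𝓡 n) (⊤ : ℕ∞) M]
    (g F : ∀ z : M, TangentSpace (𝓡 n) z →ₗ[ℝ] TangentSpace (𝓡 n) z →ₗ[ℝ] ℝ)
    (hgsymm : ∀ z v w, g z v w = g z w v)
    (hFsymm : ∀ z v w, F z v w = F z w v)
    -- g is smooth, and Lorentzian of signature (+,-,…,-):
    (hgsmooth : ContMDiff ((𝓡 n).tangent) 𝓘(ℝ) (⊤ : ℕ∞)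
      (fun v : TangentBundle (𝓡 n) M => g v.proj v.2 v.2))
    (hlorentz : ∀ z : M, ∃ e : Module.Basis (Fin n) ℝ (TangentSpace (𝓡 n) z),
      ∀ i j, g z (e i) (e j) =
        if i = j then (if (i : ℕ) = 0 then 1 else -1) else 0)
    -- F is continuously differentiable:
    (hFC1 : ContMDiff ((𝓡 n).tangent) 𝓘(ℝ) 1
      (fun v : TangentBundle (𝓡 n) M => F v.proj v.2 v.2)) :
    (∀ (z : M) (p : TangentSpace (𝓡 n) z), g z p p = 0 → 0 ≤ F z p p) ↔
      (∀ Z : Set M, IsCompact Z → ∃ C : ℝ, ∀ z ∈ Z,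
        ∀ p : TangentSpace (𝓡 n) z, 0 < g z p p → C ≤ F z p p / g z p p) := by
  classical
  have hn0 : 0 < n := hn
  constructor
  · -- forward direction
    intro hnull Z hZ
    have loc : ∀ z₀ : M, ∃ (U A : Set M), IsOpen U ∧ z₀ ∈ U ∧ U ⊆ A ∧
        ∃ C : ℝ, ∀ z ∈ A, ∀ p : TangentSpace (𝓡 n) z,
          0 < g z p p → C * g z p p ≤ F z p p := by
      intro z₀
      set e := trivializationAt (EuclideanSpace ℝ (Fin n)) (TangentSpace (𝓡 n)) z₀ with he
      set c := chartAt (EuclideanSpace ℝ (Fin n)) z₀ with hc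
      have hbase : e.baseSet = c.source := TangentBundle.trivializationAt_baseSet z₀
      have hz₀src : z₀ ∈ c.source := mem_chart_source _ z₀
      have hx₀ : c z₀ ∈ c.target := c.map_source hz₀src
      obtain ⟨r, hrpos, hballsub⟩ :=
        (Metric.nhds_basis_closedBall.mem_iff).mp (c.open_target.mem_nhds hx₀)
      set A : Set M := c.symm '' (Metric.closedBall (c z₀) r) with hA
      have hAcomp : IsCompact A :=
        (isCompact_closedBall _ _).image_of_continuousOn (c.continuousOn_symm.mono hballsub)
      have hAsub : A ⊆ c.source := by
        rintro _ ⟨x, hx, rfl⟩; exact c.map_target (hballsub hx)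
      have hAbase : A ⊆ e.baseSet := by rw [hbase]; exact hAsub
      set U : Set M := c.source ∩ c ⁻¹' (Metric.ball (c z₀) r) with hU
      have hUopen : IsOpen U :=
        c.continuousOn.isOpen_inter_preimage c.open_source Metric.isOpen_ball
      have hz₀U : z₀ ∈ U := ⟨hz₀src, by simp [Metric.mem_ball, hrpos]⟩
      have hUA : U ⊆ A := by
        rintro z ⟨hzs, hzb⟩
        exact ⟨c z, Metric.ball_subset_closedBall hzb, c.left_inv hzs⟩
      -- transported forms
      set Gz : M → (EuclideanSpace ℝ (Fin n) →ₗ[ℝ] EuclideanSpace ℝ (Fin n) →ₗ[ℝ] ℝ) :=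
        fun z => (g z).compl₁₂ (e.symmₗ ℝ z) (e.symmₗ ℝ z) with hGz
      set Fz : M → (EuclideanSpace ℝ (Fin n) →ₗ[ℝ] EuclideanSpace ℝ (Fin n) →ₗ[ℝ] ℝ) :=
        fun z => (F z).compl₁₂ (e.symmₗ ℝ z) (e.symmₗ ℝ z) with hFz
      have hGzapp : ∀ z (hz : z ∈ e.baseSet) v w, Gz z v w = g z (e.symm z v) (e.symm z w) := by
        intro z hz v w
        simp only [hGz, LinearMap.compl₁₂_apply, e.symmₗ_apply hz]
      have hFzapp : ∀ z (hz : z ∈ e.baseSet) v w, Fz z v w = F z (e.symm z v) (e.symm z w) := by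
        intro z hz v w
        simp only [hFz, LinearMap.compl₁₂_apply, e.symmₗ_apply hz]
      have hQGc : ContinuousOn
          (fun q : M × EuclideanSpace ℝ (Fin n) => Gz q.1 q.2 q.2) (e.baseSet ×ˢ Set.univ) := by
        have heq : Set.EqOn (fun q : M × EuclideanSpace ℝ (Fin n) => Gz q.1 q.2 q.2)
            ((fun vb : TangentBundle (𝓡 n) M => g vb.proj vb.2 vb.2) ∘
              (fun q : M × EuclideanSpace ℝ (Fin n) =>
                Bundle.TotalSpace.mk' (EuclideanSpace ℝ (Fin n)) q.1 (e.symm q.1 q.2)))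
            (e.baseSet ×ˢ Set.univ) := by
          intro q hq
          simp only [Function.comp_apply, hGzapp q.1 hq.1]
        exact (hgsmooth.continuous.comp_continuousOn e.continuousOn_symm).congr heq
      have hQFc : ContinuousOn
          (fun q : M × EuclideanSpace ℝ (Fin n) => Fz q.1 q.2 q.2) (e.baseSet ×ˢ Set.univ) := by
        have heq : Set.EqOn (fun q : M × EuclideanSpace ℝ (Fin n) => Fz q.1 q.2 q.2)
            ((fun vb : TangentBundle (𝓡 n) M => F vb.proj vb.2 vb.2) ∘
              (fun q : M × EuclideanSpace ℝ (Fin n) =>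
                Bundle.TotalSpace.mk' (EuclideanSpace ℝ (Fin n)) q.1 (e.symm q.1 q.2)))
            (e.baseSet ×ˢ Set.univ) := by
          intro q hq
          simp only [Function.comp_apply, hFzapp q.1 hq.1]
        exact (hFC1.continuous.comp_continuousOn e.continuousOn_symm).congr heq
      have hsymmφ : ∀ z (hz : z ∈ e.baseSet) (p : TangentSpace (𝓡 n) z),
          e.symm z (e.linearEquivAt ℝ z hz p) = p := by
        intro z hz p
        rw [← e.linearEquivAt_symm_apply (R := ℝ) z hz]
        exact (e.linearEquivAt ℝ z hz).symm_apply_apply p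
      obtain ⟨C, hC⟩ := core_bound hn0 A e.baseSet hAcomp e.open_baseSet hAbase Gz Fz hQGc hQFc
        (by intro z hz v w; rw [hGzapp z (hAbase hz), hGzapp z (hAbase hz)]; exact hgsymm z _ _)
        (by intro z hz v w; rw [hFzapp z (hAbase hz), hFzapp z (hAbase hz)]; exact hFsymm z _ _)
        (by
          intro z hz
          obtain ⟨b, hb⟩ := hlorentz z
          have hzb : z ∈ e.baseSet := hAbase hz
          refine ⟨b.map (e.linearEquivAt ℝ z hzb), ?_⟩
          intro i j
          rw [Module.Basis.map_apply, Module.Basis.map_apply, hGzapp z hzb, hsymmφ z hzb, hsymmφ z hzb]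
          exact hb i j)
        (by
          intro z hz w hw
          rw [hFzapp z (hAbase hz)]
          rw [hGzapp z (hAbase hz)] at hw
          exact hnull z _ hw)
      refine ⟨U, A, hUopen, hz₀U, hUA, C, ?_⟩
      intro z hz p hp
      have hzb : z ∈ e.baseSet := hAbase hz
      set w : EuclideanSpace ℝ (Fin n) := e.linearEquivAt ℝ z hzb p with hw
      have h1 : Gz z w w = g z p p := by rw [hGzapp z hzb, hsymmφ z hzb]
      have h2 : Fz z w w = F z p p := by rw [hFzapp z hzb, hsymmφ z hzb]
      have := hC z hz w (by rw [h1]; exact hp)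
      rw [h1, h2] at this
      exact this
    choose U A hUopen hzU hUA C hC using loc
    obtain ⟨t, ht⟩ := hZ.elim_finite_subcover U hUopen
      (fun z hz => Set.mem_iUnion.mpr ⟨z, hzU z⟩)
    rcases Finset.eq_empty_or_nonempty t with rfl | htne
    · refine ⟨0, ?_⟩
      intro z hz
      exfalso
      have := ht hz
      simp at this
    refine ⟨t.inf' htne C, ?_⟩
    intro z hz p hp
    have := ht hz
    simp only [Set.mem_iUnion] at this
    obtain ⟨i, hit, hzUi⟩ := this
    have hbound := hC i z (hUA i hzUi) p hp
    have hle : t.inf' htne C ≤ C i := Finset.inf'_le _ hit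
    rw [le_div_iff₀ hp]
    calc t.inf' htne C * g z p p ≤ C i * g z p p :=
          mul_le_mul_of_nonneg_right hle hp.le
      _ ≤ F z p p := hbound
  · -- backward direction
    intro hbound z p hp
    obtain ⟨C, hC⟩ := hbound {z} isCompact_singleton
    obtain ⟨b, hb⟩ := hlorentz z
    refine null_nonneg_of_timelike_bound hn0 (g z) (F z) (hgsymm z) (hFsymm z) b hb C ?_ p hp
    intro q hq
    have := hC z rfl q hq
    exact (le_div_iff₀ hq).mp this
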